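/- Gradient bound for the policy-gradient value function (Lemma 1, part 1): with the finite-MDP setup below, if additionally 0 ≤ r(s,a) ≤ R for all s, a and ‖∇_w log π(a|s;w)‖ ≤ G for all a, s, w, then for every w ∈ E the gradient of the value function J(w) = Σ_τ q(τ; w) R(τ) satisfies ‖∇J(w)‖ ≤ GR/(1 − γ)². -/

import Mathlib

open Finset

set_option linter.unusedSectionVars false
section Aux

variable {S A : Type*} [Fintype S] [Fintype A]
variable {F : Type*} [NormedAddCommGroup F] [NormedSpace ℝ F]

lemma traj_sum_succ {M : Type*} [AddCommMonoid M] (m : ℕ)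
    (f : (Fin (m + 2) → S) → (Fin (m + 1) → A) → M) :
    ∑ s : Fin (m+2) → S, ∑ a : Fin (m+1) → A, f s a
      = ∑ s0 : S, ∑ a0 : A, ∑ s' : Fin (m+1) → S, ∑ a' : Fin m → A,
          f (Fin.cons s0 s') (Fin.cons a0 a') := by
  have e1 : ∀ (gf : (Fin (m+2) → S) → M),
      ∑ s : Fin (m+2) → S, gf s = ∑ s0 : S, ∑ s' : Fin (m+1) → S, gf (Fin.cons s0 s') := by
    intro gf
    rw [← Equiv.sum_comp (Fin.consEquiv (fun _ : Fin (m+2) => S)) gf, Fintype.sum_prod_type]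
    rfl
  have e2 : ∀ (gf : (Fin (m+1) → A) → M),
      ∑ a : Fin (m+1) → A, gf a = ∑ a0 : A, ∑ a' : Fin m → A, gf (Fin.cons a0 a') := by
    intro gf
    rw [← Equiv.sum_comp (Fin.consEquiv (fun _ : Fin (m+1) => A)) gf, Fintype.sum_prod_type]
    rfl
  rw [e1]
  refine Finset.sum_congr rfl fun s0 _ => ?_
  calc ∑ s' : Fin (m+1) → S, ∑ a : Fin (m+1) → A, f (Fin.cons s0 s') a
      = ∑ s' : Fin (m+1) → S, ∑ a0 : A, ∑ a' : Fin m → A,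
          f (Fin.cons s0 s') (Fin.cons a0 a') :=
        Finset.sum_congr rfl fun s' _ => e2 (fun a => f (Fin.cons s0 s') a)
    _ = ∑ a0 : A, ∑ s' : Fin (m+1) → S, ∑ a' : Fin m → A,
          f (Fin.cons s0 s') (Fin.cons a0 a') := Finset.sum_comm

variable (p : S → A → ℝ) (P : S → A → S → ℝ) (r : S → A → ℝ) (γ : ℝ) (g : S → A → F)

def Qm (m : ℕ) (ν : S → ℝ) (s : Fin (m+1) → S) (a : Fin m → A) : ℝ :=
  ν (s 0) * (∏ h, p (s h.castSucc) (a h)) * ∏ h, P (s h.castSucc) (a h) (s h.succ)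

def Rwm (m : ℕ) (s : Fin (m+1) → S) (a : Fin m → A) : ℝ :=
  ∑ h : Fin m, γ ^ (h : ℕ) * r (s h.castSucc) (a h)

def Gsm (m : ℕ) (s : Fin (m+1) → S) (a : Fin m → A) : F :=
  ∑ h : Fin m, g (s h.castSucc) (a h)

lemma Qm_zero (ν : S → ℝ) (s : Fin 1 → S) (a : Fin 0 → A) :
    Qm p P 0 ν s a = ν (s 0) := by simp [Qm]

lemma Rwm_zero (s : Fin 1 → S) (a : Fin 0 → A) : Rwm r γ 0 s a = 0 := by simp [Rwm]

lemma Gsm_zero (s : Fin 1 → S) (a : Fin 0 → A) : Gsm g 0 s a = 0 := by simp [Gsm]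

lemma Qm_cons (m : ℕ) (ν : S → ℝ) (s0 : S) (a0 : A) (s' : Fin (m+1) → S) (a' : Fin m → A) :
    Qm p P (m+1) ν (Fin.cons s0 s') (Fin.cons a0 a')
      = ν s0 * p s0 a0 * Qm p P m (P s0 a0) s' a' := by
  simp only [Qm, Fin.prod_univ_succ, Fin.cons_zero, Fin.cons_succ, Fin.castSucc_zero,
    ← Fin.succ_castSucc]
  ring

lemma Rwm_cons (m : ℕ) (s0 : S) (a0 : A) (s' : Fin (m+1) → S) (a' : Fin m → A) :
    Rwm r γ (m+1) (Fin.cons s0 s') (Fin.cons a0 a')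
      = r s0 a0 + γ * Rwm r γ m s' a' := by
  simp only [Rwm, Fin.sum_univ_succ, Fin.cons_zero, Fin.cons_succ, Fin.castSucc_zero,
    ← Fin.succ_castSucc, pow_zero, one_mul, Fin.val_zero, Fin.val_succ, Finset.mul_sum]
  congr 1
  refine Finset.sum_congr rfl fun h _ => by rw [pow_succ]; ring

lemma Gsm_cons (m : ℕ) (s0 : S) (a0 : A) (s' : Fin (m+1) → S) (a' : Fin m → A) :
    Gsm g (m+1) (Fin.cons s0 s') (Fin.cons a0 a')
      = g s0 a0 + Gsm g m s' a' := by
  simp only [Gsm, Fin.sum_univ_succ, Fin.cons_zero, Fin.cons_succ, Fin.castSucc_zero,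
    ← Fin.succ_castSucc]

end Aux
section Helpers
variable {ι κ M : Type*} [Fintype ι] [Fintype κ] [AddCommMonoid M]

lemma dsum_add (f h : ι → κ → M) :
    (∑ i, ∑ j, (f i j + h i j)) = (∑ i, ∑ j, f i j) + (∑ i, ∑ j, h i j) := by
  simp [Finset.sum_add_distrib]

lemma dsum_smul_const [Module ℝ M] (f : ι → κ → ℝ) (x : M) :
    (∑ i, ∑ j, f i j • x) = (∑ i, ∑ j, f i j) • x := by
  simp only [← Finset.sum_smul]

lemma dsum_mul_const (f : ι → κ → ℝ) (c : ℝ) :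
    (∑ i, ∑ j, f i j * c) = (∑ i, ∑ j, f i j) * c := by
  simp only [← Finset.sum_mul]

lemma dsum_mul_out (c : ℝ) (f : ι → κ → ℝ) :
    (∑ i, ∑ j, c * f i j) = c * (∑ i, ∑ j, f i j) := by
  simp only [← Finset.mul_sum]

lemma dsum_smul_out {N : Type*} [AddCommMonoid N] [Module ℝ N] (c : ℝ) (f : ι → κ → N) :
    (∑ i, ∑ j, c • f i j) = c • (∑ i, ∑ j, f i j) := by
  simp only [← Finset.smul_sum]

end Helpers

section Main
variable {S A : Type*} [Fintype S] [Fintype A]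
variable {F : Type*} [NormedAddCommGroup F] [NormedSpace ℝ F]
variable {p : S → A → ℝ} {P : S → A → S → ℝ} {r : S → A → ℝ} {γ R G : ℝ} {g : S → A → F}

lemma sum_fun_fin_one {M : Type*} [AddCommMonoid M] (ν : S → M) :
    ∑ s : Fin 1 → S, ν (s 0) = ∑ x : S, ν x := by
  rw [← Equiv.sum_comp (Equiv.funUnique (Fin 1) S).symm (fun s => ν (s 0))]
  rfl

lemma Qm_sum_one (hp1 : ∀ s, ∑ a, p s a = 1) (hP1 : ∀ s a, ∑ s', P s a s' = 1) :
    ∀ (m : ℕ) (ν : S → ℝ), (∑ x, ν x = 1) →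
      ∑ s : Fin (m+1) → S, ∑ a : Fin m → A, Qm p P m ν s a = 1 := by
  intro m
  induction m with
  | zero =>
    intro ν hν
    have h1 : ∑ s : Fin 1 → S, ∑ a : Fin 0 → A, Qm p P 0 ν s a
        = ∑ s : Fin 1 → S, ν (s 0) :=
      Finset.sum_congr rfl fun s _ => by simp [Qm_zero]
    rw [h1, sum_fun_fin_one, hν]
  | succ m ih =>
    intro ν hν
    rw [traj_sum_succ]
    have h1 : ∀ s0 a0, ∑ s' : Fin (m+1) → S, ∑ a' : Fin m → A,
        Qm p P (m+1) ν (Fin.cons s0 s') (Fin.cons a0 a') = ν s0 * p s0 a0 := by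
      intro s0 a0
      simp only [Qm_cons, ← Finset.mul_sum]
      rw [ih (P s0 a0) (hP1 s0 a0), mul_one]
    simp only [h1, ← Finset.mul_sum, hp1, mul_one, hν]

lemma Qm_nonneg (hp0 : ∀ s a, 0 ≤ p s a) (hP0 : ∀ s a s', 0 ≤ P s a s')
    (m : ℕ) (ν : S → ℝ) (hν0 : ∀ x, 0 ≤ ν x) (s : Fin (m+1) → S) (a : Fin m → A) :
    0 ≤ Qm p P m ν s a :=
  mul_nonneg (mul_nonneg (hν0 _) (Finset.prod_nonneg fun _ _ => hp0 _ _))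
    (Finset.prod_nonneg fun _ _ => hP0 _ _ _)

lemma Rwm_nonneg (hr0 : ∀ s a, 0 ≤ r s a) (hγ0 : 0 ≤ γ)
    (m : ℕ) (s : Fin (m+1) → S) (a : Fin m → A) : 0 ≤ Rwm r γ m s a :=
  Finset.sum_nonneg fun _ _ => mul_nonneg (pow_nonneg hγ0 _) (hr0 _ _)

lemma Qm_smul_Gsm (hp1 : ∀ s, ∑ a, p s a = 1) (hP1 : ∀ s a, ∑ s', P s a s' = 1)
    (hpg : ∀ s, ∑ a, p s a • g s a = 0) :
    ∀ (m : ℕ) (ν : S → ℝ), (∑ x, ν x = 1) →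
      ∑ s : Fin (m+1) → S, ∑ a : Fin m → A, Qm p P m ν s a • Gsm g m s a = 0 := by
  intro m
  induction m with
  | zero => intro ν hν; simp [Gsm_zero]
  | succ m ih =>
    intro ν hν
    rw [traj_sum_succ]
    have h1 : ∀ s0 a0, ∑ s' : Fin (m+1) → S, ∑ a' : Fin m → A,
        Qm p P (m+1) ν (Fin.cons s0 s') (Fin.cons a0 a')
          • Gsm g (m+1) (Fin.cons s0 s') (Fin.cons a0 a')
        = ν s0 • (p s0 a0 • g s0 a0) := by
      intro s0 a0
      have h2 : ∀ (s' : Fin (m+1) → S) (a' : Fin m → A),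
          Qm p P (m+1) ν (Fin.cons s0 s') (Fin.cons a0 a')
            • Gsm g (m+1) (Fin.cons s0 s') (Fin.cons a0 a')
          = (ν s0 * p s0 a0) • (Qm p P m (P s0 a0) s' a' • g s0 a0
              + Qm p P m (P s0 a0) s' a' • Gsm g m s' a') := by
        intro s' a'
        rw [Qm_cons, Gsm_cons]
        module
      simp only [h2]
      rw [dsum_smul_out, dsum_add, dsum_smul_const,
        Qm_sum_one hp1 hP1 m (P s0 a0) (hP1 s0 a0), one_smul,
        ih (P s0 a0) (hP1 s0 a0), add_zero, ← smul_smul]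
    simp only [h1, ← Finset.smul_sum, hpg, smul_zero, Finset.sum_const_zero]

lemma Qm_Rwm_nonneg (hp0 : ∀ s a, 0 ≤ p s a) (hP0 : ∀ s a s', 0 ≤ P s a s')
    (hr0 : ∀ s a, 0 ≤ r s a) (hγ0 : 0 ≤ γ)
    (m : ℕ) (ν : S → ℝ) (hν0 : ∀ x, 0 ≤ ν x) :
    0 ≤ ∑ s : Fin (m+1) → S, ∑ a : Fin m → A, Qm p P m ν s a * Rwm r γ m s a :=
  Finset.sum_nonneg fun _ _ => Finset.sum_nonneg fun _ _ =>
    mul_nonneg (Qm_nonneg hp0 hP0 m ν hν0 _ _) (Rwm_nonneg hr0 hγ0 m _ _)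

lemma Qm_Rwm_bound (hp0 : ∀ s a, 0 ≤ p s a) (hp1 : ∀ s, ∑ a, p s a = 1)
    (hP0 : ∀ s a s', 0 ≤ P s a s') (hP1 : ∀ s a, ∑ s', P s a s' = 1)
    (hr0 : ∀ s a, 0 ≤ r s a) (hrR : ∀ s a, r s a ≤ R) (hR0 : 0 ≤ R)
    (hγ0 : 0 ≤ γ) (hγ1 : γ < 1) :
    ∀ (m : ℕ) (ν : S → ℝ), (∀ x, 0 ≤ ν x) → (∑ x, ν x = 1) →
      ∑ s : Fin (m+1) → S, ∑ a : Fin m → A, Qm p P m ν s a * Rwm r γ m s a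
        ≤ R / (1 - γ) := by
  have hd : 0 < 1 - γ := by linarith
  intro m
  induction m with
  | zero =>
    intro ν hν0 hν
    have h1 : ∑ s : Fin 1 → S, ∑ a : Fin 0 → A, Qm p P 0 ν s a * Rwm r γ 0 s a = 0 := by
      simp [Rwm_zero]
    rw [h1]
    positivity
  | succ m ih =>
    intro ν hν0 hν
    rw [traj_sum_succ]
    have h1 : ∀ s0 a0, ∑ s' : Fin (m+1) → S, ∑ a' : Fin m → A,
        Qm p P (m+1) ν (Fin.cons s0 s') (Fin.cons a0 a')
          * Rwm r γ (m+1) (Fin.cons s0 s') (Fin.cons a0 a')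
        ≤ ν s0 * p s0 a0 * (R / (1 - γ)) := by
      intro s0 a0
      have h2 : ∀ (s' : Fin (m+1) → S) (a' : Fin m → A),
          Qm p P (m+1) ν (Fin.cons s0 s') (Fin.cons a0 a')
            * Rwm r γ (m+1) (Fin.cons s0 s') (Fin.cons a0 a')
          = (ν s0 * p s0 a0) * (Qm p P m (P s0 a0) s' a' * r s0 a0
              + γ * (Qm p P m (P s0 a0) s' a' * Rwm r γ m s' a')) := by
        intro s' a'
        rw [Qm_cons, Rwm_cons]; ring
      simp only [h2, ← Finset.mul_sum]
      rw [dsum_add, dsum_mul_const, Qm_sum_one hp1 hP1 m (P s0 a0) (hP1 s0 a0), one_mul,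
        dsum_mul_out]
      have hW := ih (P s0 a0) (fun x => hP0 s0 a0 x) (hP1 s0 a0)
      have key : r s0 a0 + γ * (∑ s' : Fin (m+1) → S, ∑ a' : Fin m → A,
          Qm p P m (P s0 a0) s' a' * Rwm r γ m s' a') ≤ R / (1 - γ) := by
        have h3 : R + γ * (R / (1 - γ)) = R / (1 - γ) := by field_simp; ring
        have h4 := mul_le_mul_of_nonneg_left hW hγ0
        have h5 := hrR s0 a0
        linarith
      exact mul_le_mul_of_nonneg_left key (mul_nonneg (hν0 s0) (hp0 s0 a0))
    calc ∑ s0 : S, ∑ a0 : A, (∑ s' : Fin (m+1) → S, ∑ a' : Fin m → A,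
          Qm p P (m+1) ν (Fin.cons s0 s') (Fin.cons a0 a')
            * Rwm r γ (m+1) (Fin.cons s0 s') (Fin.cons a0 a'))
        ≤ ∑ s0 : S, ∑ a0 : A, ν s0 * p s0 a0 * (R / (1 - γ)) :=
          Finset.sum_le_sum fun s0 _ => Finset.sum_le_sum fun a0 _ => h1 s0 a0
      _ = R / (1 - γ) := by
          have h6 : ∀ s0, ∑ a0 : A, ν s0 * p s0 a0 * (R / (1 - γ))
              = ν s0 * (R / (1 - γ)) := by
            intro s0
            rw [← Finset.sum_mul, ← Finset.mul_sum, hp1, mul_one]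
          simp only [h6]
          rw [← Finset.sum_mul, hν, one_mul]

lemma V_bound (hp0 : ∀ s a, 0 ≤ p s a) (hp1 : ∀ s, ∑ a, p s a = 1)
    (hP0 : ∀ s a s', 0 ≤ P s a s') (hP1 : ∀ s a, ∑ s', P s a s' = 1)
    (hr0 : ∀ s a, 0 ≤ r s a) (hrR : ∀ s a, r s a ≤ R) (hR0 : 0 ≤ R)
    (hγ0 : 0 ≤ γ) (hγ1 : γ < 1)
    (hG : ∀ s a, ‖g s a‖ ≤ G) (hG0 : 0 ≤ G)
    (hpg : ∀ s, ∑ a, p s a • g s a = 0) :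
    ∀ (m : ℕ) (ν : S → ℝ), (∀ x, 0 ≤ ν x) → (∑ x, ν x = 1) →
      ‖∑ s : Fin (m+1) → S, ∑ a : Fin m → A,
          (Qm p P m ν s a * Rwm r γ m s a) • Gsm g m s a‖ ≤ G * R / (1 - γ) ^ 2 := by
  have hd : 0 < 1 - γ := by linarith
  intro m
  induction m with
  | zero =>
    intro ν hν0 hν
    have h1 : ∑ s : Fin 1 → S, ∑ a : Fin 0 → A,
        (Qm p P 0 ν s a * Rwm r γ 0 s a) • Gsm g 0 s a = 0 := by
      simp [Gsm_zero]
    rw [h1, norm_zero]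
    positivity
  | succ m ih =>
    intro ν hν0 hν
    rw [traj_sum_succ]
    have h1 : ∀ s0 a0, ‖∑ s' : Fin (m+1) → S, ∑ a' : Fin m → A,
        (Qm p P (m+1) ν (Fin.cons s0 s') (Fin.cons a0 a')
          * Rwm r γ (m+1) (Fin.cons s0 s') (Fin.cons a0 a'))
          • Gsm g (m+1) (Fin.cons s0 s') (Fin.cons a0 a')‖
        ≤ ν s0 * p s0 a0 * (G * R / (1 - γ) ^ 2) := by
      intro s0 a0
      have hν'0 : ∀ x, 0 ≤ P s0 a0 x := fun x => hP0 s0 a0 x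
      have hν'1 : ∑ x, P s0 a0 x = 1 := hP1 s0 a0
      have h2 : ∀ (s' : Fin (m+1) → S) (a' : Fin m → A),
          (Qm p P (m+1) ν (Fin.cons s0 s') (Fin.cons a0 a')
            * Rwm r γ (m+1) (Fin.cons s0 s') (Fin.cons a0 a'))
            • Gsm g (m+1) (Fin.cons s0 s') (Fin.cons a0 a')
          = (ν s0 * p s0 a0) •
              ((Qm p P m (P s0 a0) s' a' * r s0 a0) • g s0 a0
              + ((γ * (Qm p P m (P s0 a0) s' a' * Rwm r γ m s' a')) • g s0 a0
              + (r s0 a0 • (Qm p P m (P s0 a0) s' a' • Gsm g m s' a')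
              + γ • ((Qm p P m (P s0 a0) s' a' * Rwm r γ m s' a') • Gsm g m s' a')))) := by
        intro s' a'
        rw [Qm_cons, Rwm_cons, Gsm_cons]
        module
      simp only [h2]
      rw [dsum_smul_out, dsum_add, dsum_add, dsum_add, dsum_smul_const, dsum_mul_const,
        Qm_sum_one hp1 hP1 m (P s0 a0) hν'1, one_mul, dsum_smul_const, dsum_mul_out,
        dsum_smul_out, dsum_smul_out, Qm_smul_Gsm hp1 hP1 hpg m (P s0 a0) hν'1, smul_zero,
        zero_add]
      rw [norm_smul, Real.norm_eq_abs, abs_of_nonneg (mul_nonneg (hν0 s0) (hp0 s0 a0))]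
      refine mul_le_mul_of_nonneg_left ?_ (mul_nonneg (hν0 s0) (hp0 s0 a0))
      have hW0 : 0 ≤ ∑ s' : Fin (m+1) → S, ∑ a' : Fin m → A,
          Qm p P m (P s0 a0) s' a' * Rwm r γ m s' a' :=
        Qm_Rwm_nonneg hp0 hP0 hr0 hγ0 m (P s0 a0) hν'0
      have hWle : (∑ s' : Fin (m+1) → S, ∑ a' : Fin m → A,
          Qm p P m (P s0 a0) s' a' * Rwm r γ m s' a') ≤ R / (1 - γ) :=
        Qm_Rwm_bound hp0 hp1 hP0 hP1 hr0 hrR hR0 hγ0 hγ1 m (P s0 a0) hν'0 hν'1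
      have hVle := ih (P s0 a0) hν'0 hν'1
      have e1 : ‖(r s0 a0) • g s0 a0‖ ≤ R * G := by
        rw [norm_smul, Real.norm_eq_abs, abs_of_nonneg (hr0 s0 a0)]
        exact mul_le_mul (hrR s0 a0) (hG s0 a0) (norm_nonneg _) hR0
      have e2 : ‖(γ * (∑ s' : Fin (m+1) → S, ∑ a' : Fin m → A,
          Qm p P m (P s0 a0) s' a' * Rwm r γ m s' a')) • g s0 a0‖
          ≤ γ * (R / (1 - γ)) * G := by
        rw [norm_smul, Real.norm_eq_abs, abs_of_nonneg (mul_nonneg hγ0 hW0)]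
        exact mul_le_mul (mul_le_mul_of_nonneg_left hWle hγ0) (hG s0 a0)
          (norm_nonneg _) (by positivity)
      have e3 : ‖γ • ∑ s' : Fin (m+1) → S, ∑ a' : Fin m → A,
          (Qm p P m (P s0 a0) s' a' * Rwm r γ m s' a') • Gsm g m s' a'‖
          ≤ γ * (G * R / (1 - γ) ^ 2) := by
        rw [norm_smul, Real.norm_eq_abs, abs_of_nonneg hγ0]
        exact mul_le_mul_of_nonneg_left hVle hγ0
      have hid : R * G + (γ * (R / (1 - γ)) * G + γ * (G * R / (1 - γ) ^ 2))
          = G * R / (1 - γ) ^ 2 := by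
        field_simp
        ring
      have t1 := norm_add_le ((r s0 a0) • g s0 a0)
        (((γ * (∑ s' : Fin (m+1) → S, ∑ a' : Fin m → A,
          Qm p P m (P s0 a0) s' a' * Rwm r γ m s' a')) • g s0 a0)
          + γ • ∑ s' : Fin (m+1) → S, ∑ a' : Fin m → A,
          (Qm p P m (P s0 a0) s' a' * Rwm r γ m s' a') • Gsm g m s' a')
      have t2 := norm_add_le ((γ * (∑ s' : Fin (m+1) → S, ∑ a' : Fin m → A,
          Qm p P m (P s0 a0) s' a' * Rwm r γ m s' a')) • g s0 a0)
        (γ • ∑ s' : Fin (m+1) → S, ∑ a' : Fin m → A,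
          (Qm p P m (P s0 a0) s' a' * Rwm r γ m s' a') • Gsm g m s' a')
      linarith
    refine le_trans (norm_sum_le _ _) ?_
    refine le_trans (Finset.sum_le_sum fun s0 _ => norm_sum_le _ _) ?_
    refine le_trans (Finset.sum_le_sum fun s0 (_ : s0 ∈ Finset.univ) =>
      Finset.sum_le_sum fun a0 (_ : a0 ∈ Finset.univ) => h1 s0 a0) ?_
    have h6 : ∀ s0, ∑ a0 : A, ν s0 * p s0 a0 * (G * R / (1 - γ) ^ 2)
        = ν s0 * (G * R / (1 - γ) ^ 2) := by
      intro s0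
      rw [← Finset.sum_mul, ← Finset.mul_sum, hp1, mul_one]
    rw [Finset.sum_congr rfl fun s0 _ => h6 s0, ← Finset.sum_mul, hν, one_mul]

end Main

/-- Gradient bound for the policy-gradient value function (Lemma 1, part 1):
if `0 ≤ r ≤ R` and `‖∇_w log π(a|s;w)‖ ≤ G`, then `‖∇J(w)‖ ≤ GR/(1−γ)²`. -/
theorem policy_gradient_norm_bound
    (S A : Type*) [Fintype S] [Fintype A] [Nonempty S] [Nonempty A]
    (H d : ℕ) (hH : 0 < H) (hd : 0 < d)
    (μ : S → ℝ) (hμ0 : ∀ s, 0 ≤ μ s) (hμ1 : ∑ s, μ s = 1)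
    (P : S → A → S → ℝ) (hP0 : ∀ s a s', 0 ≤ P s a s')
    (hP1 : ∀ s a, ∑ s', P s a s' = 1)
    (r : S → A → ℝ) (R : ℝ) (hr : ∀ s a, 0 ≤ r s a ∧ r s a ≤ R)
    (γ : ℝ) (hγ0 : 0 < γ) (hγ1 : γ < 1)
    (π : A → S → EuclideanSpace ℝ (Fin d) → ℝ)
    (hπ0 : ∀ a s w, 0 < π a s w) (hπ1 : ∀ s w, ∑ a, π a s w = 1)
    (hπC : ∀ a s, ContDiff ℝ 1 (fun w => Real.log (π a s w)))
    (G : ℝ)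
    (hG : ∀ (a : A) (s : S) (w : EuclideanSpace ℝ (Fin d)),
      ‖gradient (fun v => Real.log (π a s v)) w‖ ≤ G)
    (q : ((Fin (H + 1) → S) × (Fin H → A)) → EuclideanSpace ℝ (Fin d) → ℝ)
    (hq : ∀ τ w, q τ w =
      μ (τ.1 0) * (∏ h : Fin H, π (τ.2 h) (τ.1 h.castSucc) w)
        * ∏ h : Fin H, P (τ.1 h.castSucc) (τ.2 h) (τ.1 h.succ))
    (Rew : ((Fin (H + 1) → S) × (Fin H → A)) → ℝ)
    (hRew : ∀ τ, Rew τ = ∑ h : Fin H, γ ^ (h : ℕ) * r (τ.1 h.castSucc) (τ.2 h))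
    (J : EuclideanSpace ℝ (Fin d) → ℝ)
    (hJ : ∀ w, J w = ∑ τ : (Fin (H + 1) → S) × (Fin H → A), q τ w * Rew τ) :
    ∀ w : EuclideanSpace ℝ (Fin d),
      ‖gradient J w‖ ≤ G * R / (1 - γ) ^ 2 := by
  intro w
  classical
  have hJeq : J = fun v => ∑ τ : (Fin (H + 1) → S) × (Fin H → A), q τ v * Rew τ :=
    funext hJ
  subst hJeq
  -- the fixed-parameter gradient-of-log objects
  set g : S → A → (EuclideanSpace ℝ (Fin d) →L[ℝ] ℝ) :=
    fun s a => fderiv ℝ (fun v => Real.log (π a s v)) w with hgdef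
  have hLd : ∀ (a : A) (s : S), Differentiable ℝ (fun v => Real.log (π a s v)) :=
    fun a s => (hπC a s).differentiable one_ne_zero
  have hgnorm : ∀ (s : S) (a : A), ‖g s a‖ ≤ G := by
    intro s a
    have h := hG a s w
    rw [show gradient (fun v => Real.log (π a s v)) w
        = (InnerProductSpace.toDual ℝ (EuclideanSpace ℝ (Fin d))).symm
            (fderiv ℝ (fun v => Real.log (π a s v)) w) from rfl,
      LinearIsometryEquiv.norm_map] at h
    exact h
  have hπd : ∀ (a : A) (s : S) (v : EuclideanSpace ℝ (Fin d)),
      HasFDerivAt (fun u => π a s u)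
        (π a s v • fderiv ℝ (fun u => Real.log (π a s u)) v) v := by
    intro a s v
    have h1 : (fun u => π a s u) = fun u => Real.exp (Real.log (π a s u)) :=
      funext fun u => (Real.exp_log (hπ0 a s u)).symm
    rw [h1]
    have h2 := ((hLd a s) v).hasFDerivAt.exp
    rwa [Real.exp_log (hπ0 a s v)] at h2
  have hzero : ∀ s : S, ∑ a : A, π a s w • g s a = 0 := by
    intro s
    have hsum : HasFDerivAt (fun v => ∑ a : A, π a s v)
        (∑ a : A, π a s w • g s a) w :=
      HasFDerivAt.fun_sum fun a _ => hπd a s w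
    have hconst : HasFDerivAt (fun v : EuclideanSpace ℝ (Fin d) => ∑ a : A, π a s v)
        (0 : EuclideanSpace ℝ (Fin d) →L[ℝ] ℝ) w := by
      have he : (fun v : EuclideanSpace ℝ (Fin d) => ∑ a : A, π a s v)
          = fun _ => (1 : ℝ) := funext fun v => hπ1 s v
      rw [he]
      exact hasFDerivAt_const 1 w
    exact hsum.unique hconst
  -- derivative of q
  have hQd : ∀ τ : (Fin (H + 1) → S) × (Fin H → A),
      HasFDerivAt (q τ)
        ((q τ w) • ∑ h : Fin H, g (τ.1 h.castSucc) (τ.2 h)) w := by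
    intro τ
    have hfun : q τ = fun v => μ (τ.1 0)
        * Real.exp (∑ h : Fin H, Real.log (π (τ.2 h) (τ.1 h.castSucc) v))
        * ∏ h : Fin H, P (τ.1 h.castSucc) (τ.2 h) (τ.1 h.succ) := by
      funext v
      rw [hq τ v, Real.exp_sum]
      congr 2
      exact Finset.prod_congr rfl fun h _ => (Real.exp_log (hπ0 _ _ v)).symm
    rw [hfun]
    have hs : HasFDerivAt
        (fun v => ∑ h : Fin H, Real.log (π (τ.2 h) (τ.1 h.castSucc) v))
        (∑ h : Fin H, g (τ.1 h.castSucc) (τ.2 h)) w :=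
      HasFDerivAt.fun_sum fun h _ => ((hLd (τ.2 h) (τ.1 h.castSucc)) w).hasFDerivAt
    have h3 := (hs.exp.const_mul (μ (τ.1 0))).mul_const
      (∏ h : Fin H, P (τ.1 h.castSucc) (τ.2 h) (τ.1 h.succ))
    refine h3.congr_fderiv ?_
    symm
    show (μ (τ.1 0)
        * Real.exp (∑ h : Fin H, Real.log (π (τ.2 h) (τ.1 h.castSucc) w))
        * ∏ h : Fin H, P (τ.1 h.castSucc) (τ.2 h) (τ.1 h.succ))
      • (∑ h : Fin H, g (τ.1 h.castSucc) (τ.2 h)) = _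
    module
  -- derivative of J
  have hJd : HasFDerivAt (fun v => ∑ τ : (Fin (H + 1) → S) × (Fin H → A), q τ v * Rew τ)
      (∑ τ : (Fin (H + 1) → S) × (Fin H → A),
        Rew τ • ((q τ w) • ∑ h : Fin H, g (τ.1 h.castSucc) (τ.2 h))) w :=
    HasFDerivAt.fun_sum fun τ _ => (hQd τ).mul_const (Rew τ)
  have hgradnorm : ‖gradient (fun v => ∑ τ : (Fin (H + 1) → S) × (Fin H → A),
        q τ v * Rew τ) w‖
      = ‖∑ τ : (Fin (H + 1) → S) × (Fin H → A),
          Rew τ • ((q τ w) • ∑ h : Fin H, g (τ.1 h.castSucc) (τ.2 h))‖ := by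
    rw [show gradient (fun v => ∑ τ : (Fin (H + 1) → S) × (Fin H → A), q τ v * Rew τ) w
        = (InnerProductSpace.toDual ℝ (EuclideanSpace ℝ (Fin d))).symm
            (fderiv ℝ (fun v => ∑ τ : (Fin (H + 1) → S) × (Fin H → A), q τ v * Rew τ) w)
        from rfl,
      LinearIsometryEquiv.norm_map, hJd.fderiv]
  rw [hgradnorm]
  -- rewrite into the combinatorial normal form
  have hterm : ∀ τ : (Fin (H + 1) → S) × (Fin H → A),
      Rew τ • ((q τ w) • ∑ h : Fin H, g (τ.1 h.castSucc) (τ.2 h))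
        = (Qm (fun s a => π a s w) P H μ τ.1 τ.2 * Rwm r γ H τ.1 τ.2)
            • Gsm g H τ.1 τ.2 := by
    intro τ
    have hq' : q τ w = Qm (fun s a => π a s w) P H μ τ.1 τ.2 := by
      rw [hq τ w]; simp [Qm]
    have hr' : Rew τ = Rwm r γ H τ.1 τ.2 := by
      rw [hRew τ]; simp [Rwm]
    have hg' : (∑ h : Fin H, g (τ.1 h.castSucc) (τ.2 h)) = Gsm g H τ.1 τ.2 := by
      simp [Gsm]
    rw [hq', hr', hg', smul_smul, mul_comm]
  rw [Finset.sum_congr rfl fun τ _ => hterm τ, Fintype.sum_prod_type]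
  -- apply the combinatorial bound
  obtain ⟨s₀⟩ := ‹Nonempty S›
  obtain ⟨a₀⟩ := ‹Nonempty A›
  have hR0 : 0 ≤ R := le_trans (hr s₀ a₀).1 (hr s₀ a₀).2
  have hG0 : 0 ≤ G := le_trans (norm_nonneg _) (hgnorm s₀ a₀)
  exact V_bound (fun s a => (hπ0 a s w).le) (fun s => hπ1 s w) hP0 hP1
    (fun s a => (hr s a).1) (fun s a => (hr s a).2) hR0 hγ0.le hγ1
    hgnorm hG0 hzero H μ hμ0 hμ1
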